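/- Let q be a prime power and m ≥ 1. The ideal of F_q[y_1,...,y_m] generated by {σ_1, ..., σ_m} ∪ E_q[Y] equals the ideal ⟨y_1, ..., y_m⟩. -/

import Mathlib

open MvPolynomial

def fieldEqs (F : Type) [Field F] [Fintype F] (m : ℕ) : Set (MvPolynomial (Fin m) F) :=
  {p | ∃ i : Fin m, p = X i ^ Fintype.card F - X i}

/-- The set of elementary symmetric polynomials `σ_1, ..., σ_m`. -/
def esymmAll (F : Type) [Field F] [Fintype F] (m : ℕ) : Set (MvPolynomial (Fin m) F) :=
  {p | ∃ j : ℕ, 1 ≤ j ∧ j ≤ m ∧ p = esymm (Fin m) F j}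

theorem stmt2 (F : Type) [Field F] [Fintype F] (m : ℕ) (hm : 1 ≤ m) :
    Ideal.span (esymmAll F m ∪ fieldEqs F m) =
      Ideal.span {p : MvPolynomial (Fin m) F | ∃ i : Fin m, p = X i} := by
  set q := Fintype.card F with hq
  have hq2 : 2 ≤ q := Fintype.one_lt_card
  set I := Ideal.span (esymmAll F m ∪ fieldEqs F m) with hI
  -- membership criterion for the RHS ideal
  have hset : {p : MvPolynomial (Fin m) F | ∃ i : Fin m, p = X i}
      = MvPolynomial.X '' (Set.univ : Set (Fin m)) := by
    ext p; simp [eq_comm]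
  apply le_antisymm
  · -- LHS ⊆ RHS : every generator has zero constant coefficient
    rw [hset, Ideal.span_le]
    rintro p (⟨j, hj1, hj2, rfl⟩ | ⟨i, rfl⟩) <;>
      rw [SetLike.mem_coe, mem_ideal_span_X_image]
    · intro d hd
      simp only [Set.mem_univ, exists_prop, true_and]
      by_contra hcon
      push_neg at hcon
      have hd0 : d = 0 := by ext i; exact hcon i
      subst hd0
      rw [MvPolynomial.mem_support_iff] at hd
      apply hd
      rw [← MvPolynomial.constantCoeff_eq]
      have : constantCoeff (esymm (Fin m) F j) = 0 := by
        rw [MvPolynomial.esymm, map_sum]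
        apply Finset.sum_eq_zero
        intro t ht
        rw [Finset.mem_powersetCard] at ht
        obtain ⟨i, hi⟩ := Finset.card_pos.mp (by omega : 0 < t.card)
        rw [map_prod]
        exact Finset.prod_eq_zero hi (by simp)
      exact this
    · intro d hd
      simp only [Set.mem_univ, exists_prop, true_and]
      by_contra hcon
      push_neg at hcon
      have hd0 : d = 0 := by ext i; exact hcon i
      subst hd0
      rw [MvPolynomial.mem_support_iff] at hd
      apply hd
      rw [← MvPolynomial.constantCoeff_eq]
      simp only [map_sub, map_pow, constantCoeff_X]
      rw [zero_pow (by omega : q ≠ 0), sub_zero]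
  · -- RHS ⊆ LHS : each X i belongs to I
    rw [Ideal.span_le]
    rintro p ⟨i, rfl⟩
    -- Step 1: (X i)^m ∈ I
    have key : (X i : MvPolynomial (Fin m) F) ^ m ∈ I := by
      have h0 : Polynomial.eval (-(X i : MvPolynomial (Fin m) F))
          (∏ k : Fin m, (Polynomial.X + Polynomial.C (X k))) = 0 := by
        rw [Polynomial.eval_prod]
        exact Finset.prod_eq_zero (Finset.mem_univ i) (by simp)
      rw [MvPolynomial.prod_C_add_X_eq_sum_esymm, Polynomial.eval_finset_sum] at h0
      simp only [Polynomial.eval_mul, Polynomial.eval_C, Polynomial.eval_pow,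
        Polynomial.eval_X, Fintype.card_fin] at h0
      rw [Finset.sum_range_succ'] at h0
      simp only [esymm_zero, Nat.sub_zero, one_mul] at h0
      have hXm : (-(X i : MvPolynomial (Fin m) F)) ^ m =
          -∑ j ∈ Finset.range m,
            esymm (Fin m) F (j + 1) * (-(X i : MvPolynomial (Fin m) F)) ^ (m - (j + 1)) := by
        linear_combination h0
      have hsum : (∑ j ∈ Finset.range m,
          esymm (Fin m) F (j + 1) * (-(X i : MvPolynomial (Fin m) F)) ^ (m - (j + 1))) ∈ I := by
        apply Ideal.sum_mem
        intro j hj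
        rw [Finset.mem_range] at hj
        exact Ideal.mul_mem_right _ _ (Ideal.subset_span
          (Or.inl ⟨j + 1, by omega, by omega, rfl⟩))
      have : (-(X i : MvPolynomial (Fin m) F)) ^ m ∈ I := by
        rw [hXm]; exact neg_mem hsum
      have h2 : ((-1 : MvPolynomial (Fin m) F)) ^ m * (-(X i)) ^ m ∈ I :=
        Ideal.mul_mem_left _ _ this
      rwa [← mul_pow, neg_one_mul, neg_neg] at h2
    -- Step 2: (X i)^(q^k) - X i ∈ I for all k
    have frob : ∀ k : ℕ, (X i : MvPolynomial (Fin m) F) ^ (q ^ k) - X i ∈ I := by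
      intro k
      induction k with
      | zero => simp
      | succ k ih =>
        have h1 : ((X i : MvPolynomial (Fin m) F) ^ (q ^ k)) ^ q - (X i) ^ q ∈ I := by
          obtain ⟨c, hc⟩ := sub_dvd_pow_sub_pow ((X i : MvPolynomial (Fin m) F) ^ (q ^ k)) (X i) q
          rw [hc]
          exact Ideal.mul_mem_right _ _ ih
        have h2 : (X i : MvPolynomial (Fin m) F) ^ q - X i ∈ I :=
          Ideal.subset_span (Or.inr ⟨i, rfl⟩)
        have h3 := I.add_mem h1 h2
        have heq : ((X i : MvPolynomial (Fin m) F) ^ (q ^ k)) ^ q - (X i) ^ q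
            + ((X i) ^ q - X i) = (X i) ^ (q ^ (k + 1)) - X i := by
          rw [← pow_mul, ← pow_succ]
          ring
        rwa [heq] at h3
    -- Step 3: combine
    have hle : m ≤ q ^ m := le_of_lt (Nat.lt_pow_self (n := m) hq2)
    have h1 : (X i : MvPolynomial (Fin m) F) ^ (q ^ m) ∈ I := by
      have : (X i : MvPolynomial (Fin m) F) ^ (q ^ m) = X i ^ m * X i ^ (q ^ m - m) := by
        rw [← pow_add]; congr 1; omega
      rw [this]
      exact Ideal.mul_mem_right _ _ key
    have := I.sub_mem h1 (frob m)
    simpa using this
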